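/- arXiv:2605.07711 — 4 statements merged into one kernel-verified Lean document; each statement's English description precedes it below -/
import Mathlib

section
/- Let B_T and B_S be the boundary sets of two partitions of [0,L) (finite sets of integers each containing 0 and L). Define a graph G on the atomic fragments determined by B_T ∪ B_S, where two fragments are adjacent iff they lie inside the same B_T-span or the same B_S-span. Then every connected component of G is a set of consecutive fragments, i.e., its union is an interval [a,b) with a,b ∈ B_T ∩ B_S. -/
open Finset

/-- Two fragments with left endpoints `x` and `y` lie inside the same token span of
the tokenizer with boundary set `C` iff no boundary of `C` lies in `(min x y, max x y]`. -/
def sameSpan (C : Finset ℕ) (x y : ℕ) : Prop :=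
  ∀ t ∈ C, ¬ (min x y < t ∧ t ≤ max x y)

/-- The fragment graph of the aligned-unit construction. Vertices are the atomic
fragments of `[0, L)` determined by the union of the teacher boundaries `BT` and the
student boundaries `BS` (a fragment is identified with its left endpoint, an element
of `BT ∪ BS` smaller than `L`). Two distinct fragments are adjacent iff they lie
inside the same teacher span or the same student span. -/
def fragGraph (BT BS : Finset ℕ) (L : ℕ) :
    SimpleGraph {x : ℕ // x ∈ BT ∪ BS ∧ x < L} where
  Adj u v := u ≠ v ∧ (sameSpan BT u.1 v.1 ∨ sameSpan BS u.1 v.1)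
  symm := by
    constructor
    intro u v h
    refine ⟨h.1.symm, ?_⟩
    rcases h.2 with h' | h'
    · exact Or.inl fun t ht hc => h' t ht (by rwa [min_comm, max_comm] at hc)
    · exact Or.inr fun t ht hc => h' t ht (by rwa [min_comm, max_comm] at hc)
  loopless := ⟨fun u h => h.1 rfl⟩

/-- **Connected components of the fragment graph are intervals with common-boundary
endpoints.** For any fragment `j`, there are common boundaries `a < b`
(`a, b ∈ BT ∩ BS`) such that a fragment `j'` is reachable from `j` exactly when its
span `[j', next j')` lies inside `[a, b)` (equivalently `a ≤ j' < b`): the component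
is a set of consecutive fragments whose union is the interval `[a, b)`. -/
theorem stmt4 (L : ℕ) (BT BS : Finset ℕ)
    (h0T : 0 ∈ BT) (hLT : L ∈ BT) (h0S : 0 ∈ BS) (hLS : L ∈ BS)
    (hTle : ∀ x ∈ BT, x ≤ L) (hSle : ∀ x ∈ BS, x ≤ L) :
    ∀ j : {x : ℕ // x ∈ BT ∪ BS ∧ x < L},
      ∃ a b : ℕ, a ∈ BT ∩ BS ∧ b ∈ BT ∩ BS ∧ a < b ∧
        ∀ j' : {x : ℕ // x ∈ BT ∪ BS ∧ x < L},
          (fragGraph BT BS L).Reachable j j' ↔ (a ≤ j'.1 ∧ j'.1 < b) := by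
  intro j
  classical
  set D := BT ∩ BS with hD
  have h0D : 0 ∈ D := mem_inter.2 ⟨h0T, h0S⟩
  have hLD : L ∈ D := mem_inter.2 ⟨hLT, hLS⟩
  have hAne : (D.filter (· ≤ j.1)).Nonempty := ⟨0, mem_filter.2 ⟨h0D, Nat.zero_le _⟩⟩
  have hBne : (D.filter (j.1 < ·)).Nonempty := ⟨L, mem_filter.2 ⟨hLD, j.2.2⟩⟩
  set a := (D.filter (· ≤ j.1)).max' hAne with ha
  set b := (D.filter (j.1 < ·)).min' hBne with hb
  have haD : a ∈ D ∧ a ≤ j.1 := by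
    have := (D.filter (· ≤ j.1)).max'_mem hAne
    rw [mem_filter] at this; exact this
  have hbD : b ∈ D ∧ j.1 < b := by
    have := (D.filter (j.1 < ·)).min'_mem hBne
    rw [mem_filter] at this; exact this
  have hamax : ∀ t ∈ D, t ≤ j.1 → t ≤ a := fun t ht h' =>
    Finset.le_max' (D.filter (· ≤ j.1)) t (mem_filter.2 ⟨ht, h'⟩)
  have hbmin : ∀ t ∈ D, j.1 < t → b ≤ t := fun t ht h' =>
    Finset.min'_le (D.filter (j.1 < ·)) t (mem_filter.2 ⟨ht, h'⟩)
  have hnoD : ∀ t ∈ D, a < t → t < b → False := by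
    intro t ht h1 h2
    rcases le_or_gt t j.1 with h | h
    · exact absurd (hamax t ht h) (not_le.2 h1)
    · exact absurd (hbmin t ht h) (not_le.2 h2)
  have hbL : b ≤ L := hSle b (mem_inter.1 hbD.1).2
  have hab : a < b := lt_of_le_of_lt haD.2 hbD.2
  refine ⟨a, b, haD.1, hbD.1, hab, ?_⟩
  have step : ∀ u v : {x : ℕ // x ∈ BT ∪ BS ∧ x < L},
      (fragGraph BT BS L).Adj u v → a ≤ u.1 → u.1 < b → a ≤ v.1 ∧ v.1 < b := by
    intro u v hadj hau hub
    have key : ∀ C : Finset ℕ, a ∈ C → b ∈ C → sameSpan C u.1 v.1 → a ≤ v.1 ∧ v.1 < b := by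
      intro C haC hbC hs
      constructor
      · by_contra h
        push_neg at h
        exact hs a haC ⟨lt_of_le_of_lt (min_le_right _ _) h, le_trans hau (le_max_left _ _)⟩
      · by_contra h
        push_neg at h
        exact hs b hbC ⟨lt_of_le_of_lt (min_le_left _ _) hub, le_trans h (le_max_right _ _)⟩
    rcases hadj.2 with hs | hs
    · exact key BT (mem_inter.1 haD.1).1 (mem_inter.1 hbD.1).1 hs
    · exact key BS (mem_inter.1 haD.1).2 (mem_inter.1 hbD.1).2 hs
  have fwd : ∀ u v : {x : ℕ // x ∈ BT ∪ BS ∧ x < L},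
      (fragGraph BT BS L).Reachable u v → a ≤ u.1 → u.1 < b → a ≤ v.1 ∧ v.1 < b := by
    intro u v huv
    obtain ⟨w⟩ := huv
    induction w with
    | nil => exact fun h1 h2 => ⟨h1, h2⟩
    | cons hadj p ih =>
        intro h1 h2
        have := step _ _ hadj h1 h2
        exact ih this.1 this.2
  have chain : ∀ y : ℕ, ∀ hy : y ∈ BT ∪ BS ∧ y < L, a ≤ y → y < b →
      ∀ x : ℕ, ∀ hx : x ∈ BT ∪ BS ∧ x < L, a ≤ x → x ≤ y →
      (fragGraph BT BS L).Reachable ⟨x, hx⟩ ⟨y, hy⟩ := by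
    intro y
    induction y using Nat.strong_induction_on with
    | _ y ih =>
      intro hy hay hyb x hx hax hxy
      rcases eq_or_lt_of_le hxy with rfl | hlt
      · exact SimpleGraph.Reachable.refl _
      · have hne : ((BT ∪ BS).filter (· < y)).Nonempty :=
          ⟨x, mem_filter.2 ⟨hx.1, hlt⟩⟩
        set z := ((BT ∪ BS).filter (· < y)).max' hne with hz
        have hzm : z ∈ BT ∪ BS ∧ z < y := by
          have := ((BT ∪ BS).filter (· < y)).max'_mem hne
          rw [mem_filter] at this; exact this
        have hxz : x ≤ z := Finset.le_max' ((BT ∪ BS).filter (· < y)) x (mem_filter.2 ⟨hx.1, hlt⟩)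
        have hzL : z < L := lt_of_lt_of_le (lt_of_lt_of_le hzm.2 (le_of_lt hyb)) hbL
        have hzv : z ∈ BT ∪ BS ∧ z < L := ⟨hzm.1, hzL⟩
        have hreach1 : (fragGraph BT BS L).Reachable ⟨x, hx⟩ ⟨z, hzv⟩ :=
          ih z hzm.2 hzv (le_trans hax hxz) (lt_trans hzm.2 hyb) x hx hax hxz
        have hyD : y ∉ D := fun h => hnoD y h (lt_of_le_of_lt hax hlt) hyb
        have hspan : sameSpan BT z y ∨ sameSpan BS z y := by
          have hzy := hzm.2
          have hmin : min z y = z := min_eq_left (le_of_lt hzy)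
          have hmax : max z y = y := max_eq_right (le_of_lt hzy)
          have hnot : ∀ t, z < t → t ≤ y → t ∈ BT ∪ BS → t = y := by
            intro t h1 h2 h3
            rcases eq_or_lt_of_le h2 with rfl | h2
            · rfl
            · exact absurd (Finset.le_max' ((BT ∪ BS).filter (· < y)) t (mem_filter.2 ⟨h3, h2⟩)) (not_le.2 h1)
          by_cases hT : y ∈ BT
          · have hS : y ∉ BS := fun hS => hyD (mem_inter.2 ⟨hT, hS⟩)
            refine Or.inr fun t ht hc => ?_
            rw [hmin, hmax] at hc
            have := hnot t hc.1 hc.2 (mem_union.2 (Or.inr ht))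
            exact hS (this ▸ ht)
          · refine Or.inl fun t ht hc => ?_
            rw [hmin, hmax] at hc
            have := hnot t hc.1 hc.2 (mem_union.2 (Or.inl ht))
            exact hT (this ▸ ht)
        have hadj : (fragGraph BT BS L).Adj ⟨z, hzv⟩ ⟨y, hy⟩ :=
          ⟨fun h => (ne_of_lt hzm.2) (congrArg Subtype.val h), hspan⟩
        exact hreach1.trans hadj.reachable
  intro j'
  constructor
  · intro h
    exact fwd j j' h haD.2 hbD.2
  · rintro ⟨h1, h2⟩
    rcases le_total j.1 j'.1 with h | h
    · exact chain j'.1 j'.2 h1 h2 j.1 j.2 haD.2 h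
    · exact (chain j.1 j.2 haD.2 hbD.2 j'.1 j'.2 h1 h).symm
end

section
/- With notation as in the aligned-unit construction, every connected component u of the fragment graph G is jointly tokenizable: the interval covered by u is a union of consecutive complete teacher-token spans and also a union of consecutive complete student-token spans. Equivalently, both endpoints of the interval covered by u belong to B_T ∩ B_S, and no teacher or student token span crosses either endpoint. -/
open Finset

/-- **Joint tokenizability of aligned units.** For every fragment `j`, the connected
component of `j` in the fragment graph covers an interval `[a, b)` whose endpoints
belong to both boundary sets (`a, b ∈ BT` and `a, b ∈ BS`); moreover every complete
teacher-token span and every complete student-token span that meets `(a, b)` is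
contained in `[a, b]`, i.e. the interval covered by the component is a union of
consecutive complete teacher spans and also of consecutive complete student spans,
and no teacher or student span crosses either endpoint. -/
theorem stmt5 (L : ℕ) (BT BS : Finset ℕ)
    (h0T : 0 ∈ BT) (hLT : L ∈ BT) (h0S : 0 ∈ BS) (hLS : L ∈ BS)
    (hTle : ∀ x ∈ BT, x ≤ L) (hSle : ∀ x ∈ BS, x ≤ L) :
    ∀ j : {x : ℕ // x ∈ BT ∪ BS ∧ x < L},
      ∃ a b : ℕ, a ∈ BT ∧ a ∈ BS ∧ b ∈ BT ∧ b ∈ BS ∧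
        (∀ j' : {x : ℕ // x ∈ BT ∪ BS ∧ x < L},
          (fragGraph BT BS L).Reachable j j' ↔ (a ≤ j'.1 ∧ j'.1 < b)) ∧
        (∀ x ∈ BT, ∀ y ∈ BT, x < y → (∀ t ∈ BT, ¬ (x < t ∧ t < y)) →
          x < b → a < y → a ≤ x ∧ y ≤ b) ∧
        (∀ x ∈ BS, ∀ y ∈ BS, x < y → (∀ t ∈ BS, ¬ (x < t ∧ t < y)) →
          x < b → a < y → a ≤ x ∧ y ≤ b) := by
  intro j
  obtain ⟨hjmem, hjL⟩ := j.2
  have hane : ((BT ∩ BS).filter (· ≤ j.1)).Nonempty :=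
    ⟨0, by simp [h0T, h0S]⟩
  have hbne : ((BT ∩ BS).filter (j.1 < ·)).Nonempty :=
    ⟨L, by simp [hLT, hLS, hjL]⟩
  set a := ((BT ∩ BS).filter (· ≤ j.1)).max' hane with ha_def
  set b := ((BT ∩ BS).filter (j.1 < ·)).min' hbne with hb_def
  have haS' := mem_filter.1 (max'_mem _ hane)
  have hbS' := mem_filter.1 (min'_mem _ hbne)
  have haT : a ∈ BT := (mem_inter.1 haS'.1).1
  have haS : a ∈ BS := (mem_inter.1 haS'.1).2
  have haj : a ≤ j.1 := haS'.2
  have hbT : b ∈ BT := (mem_inter.1 hbS'.1).1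
  have hbS : b ∈ BS := (mem_inter.1 hbS'.1).2
  have hjb : j.1 < b := hbS'.2
  have hbL : b ≤ L := hTle b hbT
  have gap : ∀ c, c ∈ BT → c ∈ BS → a < c → c < b → False := by
    intro c hcT hcS hac hcb
    by_cases hc : c ≤ j.1
    · have hca : c ≤ a := by
        rw [ha_def]; exact le_max' ((BT ∩ BS).filter (· ≤ j.1)) c (mem_filter.2 ⟨mem_inter.2 ⟨hcT, hcS⟩, hc⟩)
      exact absurd hca (not_le.2 hac)
    · have hbc : b ≤ c := by
        rw [hb_def]; exact min'_le ((BT ∩ BS).filter (j.1 < ·)) c (mem_filter.2 ⟨mem_inter.2 ⟨hcT, hcS⟩, not_le.1 hc⟩)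
      exact absurd hbc (not_le.2 hcb)
  have closure : ∀ u v : {x : ℕ // x ∈ BT ∪ BS ∧ x < L},
      (fragGraph BT BS L).Adj u v → a ≤ u.1 → u.1 < b → a ≤ v.1 ∧ v.1 < b := by
    intro u v hadj hau hub
    obtain ⟨hne, hspan⟩ := hadj
    constructor
    · by_contra h
      push_neg at h
      have hmin : min u.1 v.1 < a := lt_of_le_of_lt (min_le_right _ _) h
      have hmax : a ≤ max u.1 v.1 := le_trans hau (le_max_left _ _)
      rcases hspan with hs | hs
      · exact hs a haT ⟨hmin, hmax⟩
      · exact hs a haS ⟨hmin, hmax⟩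
    · by_contra h
      push_neg at h
      have hmin : min u.1 v.1 < b := lt_of_le_of_lt (min_le_left _ _) hub
      have hmax : b ≤ max u.1 v.1 := le_trans h (le_max_right _ _)
      rcases hspan with hs | hs
      · exact hs b hbT ⟨hmin, hmax⟩
      · exact hs b hbS ⟨hmin, hmax⟩
  have fwd : ∀ u v : {x : ℕ // x ∈ BT ∪ BS ∧ x < L}, (fragGraph BT BS L).Walk u v →
      a ≤ u.1 → u.1 < b → a ≤ v.1 ∧ v.1 < b := by
    intro u v w
    induction w with
    | nil => exact fun h1 h2 => ⟨h1, h2⟩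
    | cons hadj p ih =>
      intro h1 h2
      obtain ⟨h1', h2'⟩ := closure _ _ hadj h1 h2
      exact ih h1' h2'
  have haL : a < L := lt_of_le_of_lt haj hjL
  have haV : a ∈ BT ∪ BS ∧ a < L := ⟨mem_union_left _ haT, haL⟩
  have bwd : ∀ n, ∀ (hmem : n ∈ BT ∪ BS) (hnL : n < L), a ≤ n → n < b →
      (fragGraph BT BS L).Reachable ⟨a, haV⟩ ⟨n, hmem, hnL⟩ := by
    intro n
    induction n using Nat.strong_induction_on with
    | _ n ih =>
      intro hmem hnL han hnb
      rcases eq_or_lt_of_le han with heq | hlt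
      · subst heq
        exact SimpleGraph.Reachable.refl _
      · have hune : ((BT ∪ BS).filter (· < n)).Nonempty :=
          ⟨a, mem_filter.2 ⟨mem_union_left _ haT, hlt⟩⟩
        set u := ((BT ∪ BS).filter (· < n)).max' hune with hu_def
        have hu' := mem_filter.1 (max'_mem _ hune)
        have huU : u ∈ BT ∪ BS := hu'.1
        have hun : u < n := hu'.2
        have hau : a ≤ u := by
          rw [hu_def]; exact le_max' ((BT ∪ BS).filter (· < n)) a (mem_filter.2 ⟨mem_union_left _ haT, hlt⟩)
        have hnogap : ∀ t ∈ BT ∪ BS, t < n → t ≤ u := by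
          intro t ht h
          rw [hu_def]; exact le_max' ((BT ∪ BS).filter (· < n)) t (mem_filter.2 ⟨ht, h⟩)
        have hub : u < b := lt_trans hun hnb
        have huL : u < L := lt_of_lt_of_le hub hbL
        have hnot : ¬ (n ∈ BT ∧ n ∈ BS) := fun h => gap n h.1 h.2 hlt hnb
        have hadj : (fragGraph BT BS L).Adj ⟨u, huU, huL⟩ ⟨n, hmem, hnL⟩ := by
          refine ⟨fun h => (ne_of_lt hun) (congrArg Subtype.val h), ?_⟩
        -- choose the side whose boundary set misses n
          by_cases hnT : n ∈ BT
          · have hnS : n ∉ BS := fun h => hnot ⟨hnT, h⟩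
            refine Or.inr fun t htS hc => ?_
            rw [min_eq_left (le_of_lt hun), max_eq_right (le_of_lt hun)] at hc
            rcases eq_or_lt_of_le hc.2 with rfl | hlt'
            · exact hnS htS
            · exact absurd (hnogap t (mem_union_right _ htS) hlt') (not_le.2 hc.1)
          · refine Or.inl fun t htT hc => ?_
            rw [min_eq_left (le_of_lt hun), max_eq_right (le_of_lt hun)] at hc
            rcases eq_or_lt_of_le hc.2 with rfl | hlt'
            · exact hnT htT
            · exact absurd (hnogap t (mem_union_left _ htT) hlt') (not_le.2 hc.1)
        exact (ih u hun huU huL hau hub).trans hadj.reachable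
  refine ⟨a, b, haT, haS, hbT, hbS, ?_, ?_, ?_⟩
  · intro v
    constructor
    · intro h
      obtain ⟨w⟩ := h
      exact fwd j v w haj hjb
    · rintro ⟨h1, h2⟩
      exact (bwd j.1 hjmem hjL haj hjb).symm.trans (bwd v.1 v.2.1 v.2.2 h1 h2)
  · intro x hx y hy hxy hcons hxb hay
    constructor
    · by_contra h
      push_neg at h
      exact hcons a haT ⟨h, hay⟩
    · by_contra h
      push_neg at h
      exact hcons b hbT ⟨hxb, h⟩
  · intro x hx y hy hxy hcons hxb hay
    constructor
    · by_contra h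
      push_neg at h
      exact hcons a haS ⟨h, hay⟩
    · by_contra h
      push_neg at h
      exact hcons b hbS ⟨hxb, h⟩
end

section
/- Minimality of aligned units: let u be a connected component of the fragment graph G covering the interval [a,b). Then there is no interior point z with a < z < b such that z ∈ B_T ∩ B_S. Consequently u admits no decomposition into two nonempty consecutive pieces each of which is jointly tokenizable. -/
open Finset

/-- **Minimality of aligned units.** Let the connected component of a fragment `j`
cover the interval `[a, b)` (with boundary points `a, b`). Then no interior point
`z` with `a < z < b` is a common boundary (`z ∈ BT ∩ BS`); consequently the unit
admits no decomposition into two nonempty consecutive pieces that are each jointly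
tokenizable (which would require a common boundary strictly inside `(a, b)`). -/
theorem stmt6 (L : ℕ) (BT BS : Finset ℕ)
    (h0T : 0 ∈ BT) (hLT : L ∈ BT) (h0S : 0 ∈ BS) (hLS : L ∈ BS)
    (hTle : ∀ x ∈ BT, x ≤ L) (hSle : ∀ x ∈ BS, x ≤ L)
    (j : {x : ℕ // x ∈ BT ∪ BS ∧ x < L}) (a b : ℕ)
    (ha : a ∈ BT ∪ BS) (hb : b ∈ BT ∪ BS)
    (hcomp : ∀ j' : {x : ℕ // x ∈ BT ∪ BS ∧ x < L},
      (fragGraph BT BS L).Reachable j j' ↔ (a ≤ j'.1 ∧ j'.1 < b)) :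
    (∀ z ∈ BT ∩ BS, ¬ (a < z ∧ z < b)) ∧
    ¬ ∃ z : ℕ, (a < z ∧ z < b) ∧ z ∈ BT ∧ z ∈ BS := by
  have key : ∀ z, z ∈ BT → z ∈ BS → ¬ (a < z ∧ z < b) := by
    intro z hzT hzS ⟨haz, hzb⟩
    have hbL : b ≤ L := (mem_union.mp hb).elim (hTle b) (hSle b)
    have hzL : z < L := lt_of_lt_of_le hzb hbL
    have haL : a < L := lt_trans haz hzL
    -- edges do not cross z
    have step : ∀ u v : {x : ℕ // x ∈ BT ∪ BS ∧ x < L},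
        (fragGraph BT BS L).Adj u v → (u.1 < z ↔ v.1 < z) := by
      intro u v hadj
      constructor
      · intro hu
        by_contra hv
        push_neg at hv
        have hmin : min u.1 v.1 < z := lt_of_le_of_lt (min_le_left _ _) hu
        have hmax : z ≤ max u.1 v.1 := le_trans hv (le_max_right _ _)
        rcases hadj.2 with h | h
        · exact h z hzT ⟨hmin, hmax⟩
        · exact h z hzS ⟨hmin, hmax⟩
      · intro hv
        by_contra hu
        push_neg at hu
        have hmin : min u.1 v.1 < z := lt_of_le_of_lt (min_le_right _ _) hv
        have hmax : z ≤ max u.1 v.1 := le_trans hu (le_max_left _ _)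
        rcases hadj.2 with h | h
        · exact h z hzT ⟨hmin, hmax⟩
        · exact h z hzS ⟨hmin, hmax⟩
    have reach : ∀ u v : {x : ℕ // x ∈ BT ∪ BS ∧ x < L},
        (fragGraph BT BS L).Reachable u v → (u.1 < z ↔ v.1 < z) := by
      intro u v ⟨w⟩
      induction w with
      | nil => rfl
      | cons hadj _ ih => exact (step _ _ hadj).trans ih
    set va : {x : ℕ // x ∈ BT ∪ BS ∧ x < L} := ⟨a, ha, haL⟩
    set vz : {x : ℕ // x ∈ BT ∪ BS ∧ x < L} := ⟨z, mem_union.mpr (Or.inl hzT), hzL⟩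
    have hra : (fragGraph BT BS L).Reachable j va :=
      (hcomp va).mpr ⟨le_refl a, lt_trans haz hzb⟩
    have hrz : (fragGraph BT BS L).Reachable j vz :=
      (hcomp vz).mpr ⟨le_of_lt haz, hzb⟩
    have : a < z ↔ z < z := reach va vz (hra.symm.trans hrz)
    exact lt_irrefl z (this.mp haz)
  refine ⟨fun z hz => key z (mem_inter.mp hz).1 (mem_inter.mp hz).2, ?_⟩
  rintro ⟨z, hzab, hzT, hzS⟩
  exact key z hzT hzS hzab
end

section
/- The intersection B_T ∩ B_S of the two boundary sets (which always contains 0 and L) induces a partition of [0,L) into intervals, and this partition coincides exactly with the partition into connected components of the fragment graph G. In particular, the minimal aligned units are precisely the intervals between consecutive common boundaries. -/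
open Finset

lemma sameSpan_trans {C : Finset ℕ} {x y z : ℕ} (h1 : sameSpan C x y) (h2 : sameSpan C y z) :
    sameSpan C x z := by
  intro t ht hc
  have := h1 t ht
  have := h2 t ht
  omega

lemma sameSpan_refl (C : Finset ℕ) (x : ℕ) : sameSpan C x x := by
  intro t ht hc; omega

lemma back (L : ℕ) (BT BS : Finset ℕ) :
    ∀ d : ℕ, ∀ j j' : {x : ℕ // x ∈ BT ∪ BS ∧ x < L}, j'.1 - j.1 ≤ d → j.1 ≤ j'.1 →
      sameSpan (BT ∩ BS) j.1 j'.1 → (fragGraph BT BS L).Reachable j j' := by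
  intro d
  induction d with
  | zero =>
    intro j j' hd hle _
    have : j = j' := Subtype.ext (by omega)
    exact this ▸ SimpleGraph.Reachable.refl j
  | succ d ih =>
    intro j j' hd hle hspan
    rcases eq_or_lt_of_le hle with heq | hlt
    · have : j = j' := Subtype.ext heq
      exact this ▸ SimpleGraph.Reachable.refl j
    · set x := j.1 with hx
      set y := j'.1 with hy
      set S := (BT ∪ BS).filter (fun t => x < t ∧ t ≤ y) with hS
      have hyS : y ∈ S := by
        simp only [hS, mem_filter]
        exact ⟨j'.2.1, hlt, le_refl y⟩
      have hne : S.Nonempty := ⟨y, hyS⟩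
      set n := S.min' hne with hn
      have hnS : n ∈ S := S.min'_mem hne
      simp only [hS, mem_filter] at hnS
      obtain ⟨hnB, hxn, hny⟩ := hnS
      have hnL : n < L := lt_of_le_of_lt hny j'.2.2
      have hnV : n ∈ BT ∪ BS ∧ n < L := ⟨hnB, hnL⟩
      have hnotboth : n ∉ BT ∩ BS := by
        intro hmem
        exact hspan n hmem (by omega)
      have hmin : ∀ t ∈ BT ∪ BS, x < t → t ≤ y → n ≤ t := by
        intro t htB ht1 ht2
        exact S.min'_le t (by simp only [hS, mem_filter]; exact ⟨htB, ht1, ht2⟩)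
      -- adjacency between j and ⟨n, hnV⟩
      have hadj : (fragGraph BT BS L).Adj j ⟨n, hnV⟩ := by
        refine ⟨fun h => by simp only [Subtype.ext_iff] at h; omega, ?_⟩
        have key : ∀ C : Finset ℕ, C ⊆ BT ∪ BS → n ∉ C → sameSpan C x n := by
          intro C hsub hnC t ht hc
          have htn : x < t ∧ t ≤ n := by omega
          have := hmin t (hsub ht) htn.1 (le_trans htn.2 hny)
          have : t = n := by omega
          exact hnC (this ▸ ht)
        rcases mem_union.mp hnB with hT | hSm
        · have hnS' : n ∉ BS := fun h => hnotboth (mem_inter.mpr ⟨hT, h⟩)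
          exact Or.inr (key BS subset_union_right hnS')
        · by_cases hT : n ∈ BT
          · have hnS' : n ∉ BS := fun h => hnotboth (mem_inter.mpr ⟨hT, h⟩)
            exact Or.inr (key BS subset_union_right hnS')
          · exact Or.inl (key BT subset_union_left hT)
      have hstep : (fragGraph BT BS L).Reachable j ⟨n, hnV⟩ := hadj.reachable
      have hrest : (fragGraph BT BS L).Reachable ⟨n, hnV⟩ j' := by
        apply ih ⟨n, hnV⟩ j' (by simp only; omega) (by simp only; omega)
        intro t ht hc
        exact hspan t ht (by simp only at hc; omega)
      exact hstep.trans hrest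

/-- **Components coincide with the partition induced by common boundaries.** Two
fragments are in the same connected component of the fragment graph iff no common
boundary (element of `BT ∩ BS`) separates them, i.e. iff they lie in the same
interval between consecutive common boundaries. Hence the minimal aligned units are
precisely the intervals between consecutive common boundaries. -/
theorem stmt7 (L : ℕ) (BT BS : Finset ℕ)
    (h0T : 0 ∈ BT) (hLT : L ∈ BT) (h0S : 0 ∈ BS) (hLS : L ∈ BS)
    (hTle : ∀ x ∈ BT, x ≤ L) (hSle : ∀ x ∈ BS, x ≤ L) :
    ∀ j j' : {x : ℕ // x ∈ BT ∪ BS ∧ x < L},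
      (fragGraph BT BS L).Reachable j j' ↔ sameSpan (BT ∩ BS) j.1 j'.1 := by
  intro j j'
  constructor
  · intro h
    obtain ⟨w⟩ := h
    induction w with
    | nil => exact sameSpan_refl _ _
    | cons hadj p ih =>
      refine sameSpan_trans ?_ ih
      rcases hadj.2 with h' | h'
      · exact fun t ht hc => h' t (mem_inter.mp ht).1 hc
      · exact fun t ht hc => h' t (mem_inter.mp ht).2 hc
  · intro h
    rcases le_total j.1 j'.1 with hle | hle
    · exact back L BT BS (j'.1 - j.1) j j' le_rfl hle h
    · exact (back L BT BS (j.1 - j'.1) j' j le_rfl hle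
        (fun t ht hc => h t ht (by omega))).symm
end
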